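/- Let l ≥ 1, and suppose a binomial p = z_l^a z_{l+1}^b z_{l+2}^c − ∏_{q ≥ l+1} z_q^{d_q} with a > 0 and a+b+c = Σ d_q lies in the kernel of the monomial substitution z₀ ↦ s, z₁ ↦ su, z₂ ↦ sv, z_{2k−1} ↦ su^{2k−1}, z_{2k} ↦ svu^{2k−2}. Then p = 0 is impossible unless some variable z_m with m ≥ l+3 appears in one of the two monomials; i.e., no nonzero binomial in the toric ideal has both monomials supported only on {z_l, z_{l+1}, z_{l+2}} with l ≥ 1. -/

import Mathlib

open MvPolynomial

/-- The monomial substitution `z₀ ↦ s, z₁ ↦ su, z₂ ↦ sv, z_{2k-1} ↦ su^{2k-1},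
z_{2k} ↦ svu^{2k-2}`, where `s = X 0`, `u = X 1`, `v = X 2`. -/
noncomputable def toricSubst (i : ℕ) : MvPolynomial (Fin 3) ℂ :=
  if i = 0 then X 0
  else if Odd i then X 0 * X 1 ^ i
  else X 0 * X 2 * X 1 ^ (i - 2)

/-- u-degree of toricSubst i -/
def Udeg (i : ℕ) : ℕ := if i = 0 then 0 else if Odd i then i else i - 2
/-- v-degree of toricSubst i -/
def Vdeg (i : ℕ) : ℕ := if i = 0 then 0 else if Odd i then 0 else 1

lemma Udeg_odd (i : ℕ) (h : i % 2 = 1) : Udeg i = i := by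
  have h0 : i ≠ 0 := by omega
  simp [Udeg, h0, Nat.odd_iff, h]

lemma Udeg_even (i : ℕ) (h0 : i ≠ 0) (h : i % 2 = 0) : Udeg i = i - 2 := by
  simp [Udeg, h0, Nat.odd_iff, h]

lemma Vdeg_odd (i : ℕ) (h : i % 2 = 1) : Vdeg i = 0 := by
  have h0 : i ≠ 0 := by omega
  simp [Vdeg, h0, Nat.odd_iff, h]

lemma Vdeg_even (i : ℕ) (h0 : i ≠ 0) (h : i % 2 = 0) : Vdeg i = 1 := by
  simp [Vdeg, h0, Nat.odd_iff, h]

lemma eval_toricSubst_U (i : ℕ) :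
    eval ![1, 2, 1] (toricSubst i) = (2 : ℂ) ^ Udeg i := by
  unfold toricSubst Udeg
  split_ifs <;> simp

lemma eval_toricSubst_V (i : ℕ) :
    eval ![1, 1, 2] (toricSubst i) = (2 : ℂ) ^ Vdeg i := by
  unfold toricSubst Vdeg
  split_ifs <;> simp

lemma pow_two_inj {m n : ℕ} (h : (2 : ℂ) ^ m = 2 ^ n) : m = n := by
  have h2 : ((2 ^ m : ℕ) : ℂ) = ((2 ^ n : ℕ) : ℂ) := by push_cast; exact h
  exact Nat.pow_right_injective (le_refl 2) (Nat.cast_injective h2)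

lemma extract (w : ℕ → ℕ) (x : Fin 3 → ℂ)
    (hev : ∀ i, eval x (toricSubst i) = (2 : ℂ) ^ w i)
    (a b c l : ℕ) (d : ℕ →₀ ℕ)
    (hker : toricSubst l ^ a * toricSubst (l + 1) ^ b * toricSubst (l + 2) ^ c
      = d.prod fun q e => toricSubst q ^ e) :
    w l * a + w (l + 1) * b + w (l + 2) * c = d.sum fun q e => w q * e := by
  have h := congrArg (eval x) hker
  rw [map_mul, map_mul, map_pow, map_pow, map_pow, hev, hev, hev,
    map_finsuppProd] at h
  simp_rw [map_pow, hev, ← pow_mul] at h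
  have hr : (d.prod fun q e => (2 : ℂ) ^ (w q * e))
      = 2 ^ (d.sum fun q e => w q * e) := by
    rw [Finsupp.prod, Finsupp.sum, ← Finset.prod_pow_eq_pow_sum]
  rw [hr, ← pow_add, ← pow_add] at h
  exact pow_two_inj h

theorem support_must_exceed (l : ℕ) (hl : 1 ≤ l) (a b c : ℕ) (ha : 0 < a) (d : ℕ →₀ ℕ)
    (hsupp : ∀ q ∈ d.support, l + 1 ≤ q)
    (hdeg : a + b + c = d.sum fun _ e => e)
    (hker : toricSubst l ^ a * toricSubst (l + 1) ^ b * toricSubst (l + 2) ^ c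
      = d.prod fun q e => toricSubst q ^ e) :
    ∃ q ∈ d.support, l + 3 ≤ q := by
  by_contra hcon
  push_neg at hcon
  have hsub : d.support ⊆ ({l + 1, l + 2} : Finset ℕ) := by
    intro q hq
    have h1 := hsupp q hq
    have h2 := hcon q hq
    simp only [Finset.mem_insert, Finset.mem_singleton]
    omega
  have hne : (l + 1 : ℕ) ∉ ({l + 2} : Finset ℕ) := by simp
  -- sums over the two-element set
  have sum2 : ∀ w : ℕ → ℕ, (d.sum fun q e => w q * e)
      = w (l + 1) * d (l + 1) + w (l + 2) * d (l + 2) := by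
    intro w
    rw [Finsupp.sum_of_support_subset d hsub _ (fun i _ => by simp)]
    rw [Finset.sum_insert hne, Finset.sum_singleton]
  have hdeg' : a + b + c = d (l + 1) + d (l + 2) := by
    have := sum2 (fun _ => 1)
    simp only [one_mul] at this
    rw [hdeg]
    exact this
  have hU := extract Udeg ![1, 2, 1] eval_toricSubst_U a b c l d hker
  have hV := extract Vdeg ![1, 1, 2] eval_toricSubst_V a b c l d hker
  rw [sum2] at hU hV
  set d1 := d (l + 1)
  set d2 := d (l + 2)
  rcases Nat.even_or_odd l with hev | hev
  · -- l even, l ≥ 2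
    have hl2 : 2 ≤ l := by
      have := Nat.even_iff.mp hev; omega
    have hpar := Nat.even_iff.mp hev
    have e1 : Udeg l = l - 2 := Udeg_even l (by omega) hpar
    have e2 : Udeg (l + 1) = l + 1 := Udeg_odd _ (by omega)
    have e3 : Udeg (l + 2) = l := by
      rw [Udeg_even (l + 2) (by omega) (by omega)]; omega
    have f1 : Vdeg l = 1 := Vdeg_even l (by omega) hpar
    have f2 : Vdeg (l + 1) = 0 := Vdeg_odd _ (by omega)
    have f3 : Vdeg (l + 2) = 1 := Vdeg_even _ (by omega) (by omega)
    rw [e1, e2, e3] at hU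
    rw [f1, f2, f3] at hV
    -- hV : 1*a + 0*b + 1*c = 0*d1 + 1*d2
    have hd2 : d2 = a + c := by omega
    have hd1 : d1 = b := by omega
    rw [hd1, hd2] at hU
    have key : l * (a + c) = l * a + l * c := Nat.mul_add _ _ _
    have key2 : l * a = (l - 2) * a + 2 * a := by
      have h22 : l - 2 + 2 = l := by omega
      rw [← Nat.add_mul, h22]
    rw [key, key2] at hU
    omega
  · -- l odd
    have hlo := Nat.odd_iff.mp hev
    have e1 : Udeg l = l := Udeg_odd _ hlo
    have e2 : Udeg (l + 1) = l - 1 := by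
      rw [Udeg_even (l + 1) (by omega) (by omega)]; omega
    have e3 : Udeg (l + 2) = l + 2 := Udeg_odd _ (by omega)
    have f1 : Vdeg l = 0 := Vdeg_odd _ hlo
    have f2 : Vdeg (l + 1) = 1 := Vdeg_even _ (by omega) (by omega)
    have f3 : Vdeg (l + 2) = 0 := Vdeg_odd _ (by omega)
    rw [e1, e2, e3] at hU
    rw [f1, f2, f3] at hV
    have hd1 : d1 = b := by omega
    have hd2 : d2 = a + c := by omega
    rw [hd1, hd2] at hU
    have key : (l + 2) * (a + c) = (l + 2) * a + (l + 2) * c := Nat.mul_add _ _ _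
    have key2 : (l + 2) * a = l * a + 2 * a := by ring
    rw [key, key2] at hU
    omega
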